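/- Let T₂'(x,y) = a(x₁y₁ + x₁y₂) + a(x₃y₁ + x₄y₂) + a(x₃y₅ + x₄y₅) with a ≠ 0 be a bilinear form on ℝ⁵ × ℝ⁵ with sup norms (signs all +). Then ‖T₂'‖ ≥ 4|a|, and consequently (∑_{i,j}|T₂'(e_i,e_j)|^{4/3})^{3/4} / ‖T₂'‖ ≤ 6^{3/4}/4 < √2, so T₂' is not an extremum of Littlewood's 4/3 inequality. -/

import Mathlib

/-- Standard basis vector of `ℓ∞ⁿ`. -/
noncomputable def stdBasis (n : ℕ) (i : Fin n) : PiLp ⊤ (fun _ : Fin n => ℝ) :=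
  (WithLp.equiv ⊤ (∀ _ : Fin n, ℝ)).symm (Pi.single i 1)

/-- For `T₂'(x,y) = a(x₁y₁ + x₁y₂) + a(x₃y₁ + x₄y₂) + a(x₃y₅ + x₄y₅)` with `a ≠ 0`
on `ℓ∞⁵ × ℓ∞⁵`: `‖T₂'‖ ≥ 4|a|`, and the Littlewood `4/3` ratio satisfies
`(∑|T₂'(e_i,e_j)|^{4/3})^{3/4} / ‖T₂'‖ ≤ 6^{3/4}/4 < √2`, so `T₂'` is not an
extremum of Littlewood's `4/3` inequality. -/
theorem stmt13 (a : ℝ) (ha : a ≠ 0)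
    (T : (PiLp ⊤ fun _ : Fin 5 => ℝ) →L[ℝ] (PiLp ⊤ fun _ : Fin 5 => ℝ) →L[ℝ] ℝ)
    (hT : ∀ x y : PiLp ⊤ fun _ : Fin 5 => ℝ,
      T x y = a * (x 0 * y 0 + x 0 * y 1) + a * (x 2 * y 0 + x 3 * y 1)
        + a * (x 2 * y 4 + x 3 * y 4)) :
    4 * |a| ≤ ‖T‖
      ∧ (∑ i : Fin 5, ∑ j : Fin 5,
            |T (stdBasis 5 i) (stdBasis 5 j)| ^ ((4 : ℝ) / 3)) ^ ((3 : ℝ) / 4) / ‖T‖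
          ≤ (6 : ℝ) ^ ((3 : ℝ) / 4) / 4
      ∧ (6 : ℝ) ^ ((3 : ℝ) / 4) / 4 < Real.sqrt 2 := by
  have ha' : 0 < |a| := abs_pos.mpr ha
  -- the all-ones vector
  set x1 : PiLp ⊤ (fun _ : Fin 5 => ℝ) :=
    (WithLp.equiv ⊤ (∀ _ : Fin 5, ℝ)).symm (Function.const _ 1) with hx1
  have hx1norm : ‖x1‖ = 1 := by
    rw [hx1, WithLp.equiv_symm_apply, PiLp.norm_toLp_const']
    simp
  have hx1app : ∀ i : Fin 5, x1 i = 1 := fun i => rfl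
  have hval : T x1 x1 = 6 * a := by rw [hT]; simp [hx1app]; ring
  have hle : 6 * |a| ≤ ‖T‖ := by
    have := T.le_opNorm₂ x1 x1
    rw [hval, hx1norm] at this
    calc 6 * |a| = |6 * a| := by rw [abs_mul]; norm_num
    _ ≤ ‖T‖ * 1 * 1 := this
    _ = ‖T‖ := by ring
  have h1 : 4 * |a| ≤ ‖T‖ := le_trans (by linarith) hle
  refine ⟨h1, ?_, ?_⟩
  · -- compute the sum
    have hsum : (∑ i : Fin 5, ∑ j : Fin 5,
        |T (stdBasis 5 i) (stdBasis 5 j)| ^ ((4 : ℝ) / 3)) = 6 * |a| ^ ((4 : ℝ) / 3) := by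
      have happ : ∀ i j : Fin 5, (stdBasis 5 i : PiLp ⊤ fun _ : Fin 5 => ℝ) j
          = if j = i then 1 else 0 := by
        intro i j
        simp [stdBasis, Pi.single_apply]
      simp only [Fin.sum_univ_five, hT, happ]
      simp only [Fin.isValue, Fin.reduceEq, reduceIte]
      norm_num [Real.zero_rpow (show (4:ℝ)/3 ≠ 0 by norm_num)]
      ring
    rw [hsum]
    have hnum : (6 * |a| ^ ((4 : ℝ) / 3)) ^ ((3 : ℝ) / 4) = 6 ^ ((3:ℝ)/4) * |a| := by
      rw [Real.mul_rpow (by norm_num) (Real.rpow_nonneg (abs_nonneg a) _),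
        ← Real.rpow_mul (abs_nonneg a)]
      norm_num
    rw [hnum]
    have hTpos : 0 < ‖T‖ := lt_of_lt_of_le (by positivity) h1
    rw [div_le_div_iff₀ hTpos (by norm_num : (0:ℝ) < 4)]
    have h6 : (0:ℝ) ≤ 6 ^ ((3:ℝ)/4) := Real.rpow_nonneg (by norm_num) _
    calc 6 ^ ((3:ℝ)/4) * |a| * 4 = 6 ^ ((3:ℝ)/4) * (4 * |a|) := by ring
    _ ≤ 6 ^ ((3:ℝ)/4) * ‖T‖ := by nlinarith
  · -- numeric inequality
    have hx : (6:ℝ) ^ ((3:ℝ)/4) < 4 := by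
      have h4 : ((6:ℝ) ^ ((3:ℝ)/4)) ^ (4:ℕ) = 216 := by
        rw [← Real.rpow_natCast ((6:ℝ) ^ ((3:ℝ)/4)) 4, ← Real.rpow_mul (by norm_num)]
        norm_num
      by_contra h
      push_neg at h
      have := pow_le_pow_left₀ (by norm_num : (0:ℝ) ≤ 4) h 4
      rw [h4] at this
      norm_num at this
    have hs : (1:ℝ) < Real.sqrt 2 := by
      rw [show (1:ℝ) = Real.sqrt 1 from (Real.sqrt_one).symm]
      exact Real.sqrt_lt_sqrt (by norm_num) (by norm_num)
    calc (6:ℝ) ^ ((3:ℝ)/4) / 4 < 4 / 4 := by linarith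
    _ = 1 := by norm_num
    _ < Real.sqrt 2 := hs
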